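/- Let ω = (1/2)(dy₁∧dy₂ + dy₂∧d(y₃+y₄) + d(y₃+y₄−y₂)∧dy₁ + 2 dy₃∧dy₄ + d(y₃+y₄)∧dy₅ + dy₅∧d(y₁+y₂) + d(y₁+y₂−y₅)∧d(y₃+y₄−y₅) + 2 d(y₁+y₂+y₃+y₄−2y₅)∧dy₆ + 2 dy₇∧dy₈) be a 2-form on ℝ⁸. Then ω⁴/4! = ±2 dy₁∧dy₂∧⋯∧dy₈, i.e. its coefficient with respect to dy₁∧⋯∧dy₈ has absolute value 2. -/
import Mathlib

noncomputable def dy (i : Fin 8) : ExteriorAlgebra ℝ (Fin 8 → ℝ) :=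
  ExteriorAlgebra.ι ℝ (Pi.single i (1 : ℝ))

noncomputable def ω21 : ExteriorAlgebra ℝ (Fin 8 → ℝ) :=
  ((2 : ℝ)⁻¹) • (dy 0 * dy 1
    + dy 1 * (dy 2 + dy 3)
    + (dy 2 + dy 3 - dy 1) * dy 0
    + (2 : ℝ) • (dy 2 * dy 3)
    + (dy 2 + dy 3) * dy 4
    + dy 4 * (dy 0 + dy 1)
    + (dy 0 + dy 1 - dy 4) * (dy 2 + dy 3 - dy 4)
    + (2 : ℝ) • ((dy 0 + dy 1 + dy 2 + dy 3 - (2 : ℝ) • dy 4) * dy 5)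
    + (2 : ℝ) • (dy 6 * dy 7))

lemma dy_sq (i : Fin 8) : dy i * dy i = 0 := ExteriorAlgebra.ι_sq_zero _

lemma dy_swap (i j : Fin 8) (_h : j < i) : dy i * dy j = -(dy j * dy i) := by
  have := ExteriorAlgebra.ι_add_mul_swap (R := ℝ) (M := Fin 8 → ℝ)
    (Pi.single i (1:ℝ)) (Pi.single j (1:ℝ))
  exact eq_neg_of_add_eq_zero_left this

lemma dy_sq' (i : Fin 8) (x : ExteriorAlgebra ℝ (Fin 8 → ℝ)) : dy i * (dy i * x) = 0 := by
  rw [← mul_assoc, dy_sq, zero_mul]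

lemma dy_swap' (i j : Fin 8) (h : j < i) (x : ExteriorAlgebra ℝ (Fin 8 → ℝ)) :
    dy i * (dy j * x) = -(dy j * (dy i * x)) := by
  rw [← mul_assoc, dy_swap i j h, neg_mul, mul_assoc]

noncomputable def ωc : ExteriorAlgebra ℝ (Fin 8 → ℝ) :=
  (dy 0*dy 1) + (-(dy 0*dy 4)) + (dy 0*dy 5) + (dy 1*dy 2) + (dy 1*dy 3) + (-(dy 1*dy 4))
  + (dy 1*dy 5) + (dy 2*dy 3) + (dy 2*dy 4) + (dy 2*dy 5) + (dy 3*dy 4) + (dy 3*dy 5)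
  + (-((2:ℝ) • (dy 4*dy 5))) + (dy 6*dy 7)

noncomputable def τ : ExteriorAlgebra ℝ (Fin 8 → ℝ) :=
  ((2:ℝ) • (dy 0*dy 1*dy 2*dy 3)) + ((4:ℝ) • (dy 0*dy 1*dy 2*dy 5)) + ((4:ℝ) • (dy 0*dy 1*dy 3*dy 5)) + (-((4:ℝ) • (dy 0*dy 1*dy 4*dy 5))) + ((2:ℝ) • (dy 0*dy 1*dy 6*dy 7)) + (-((2:ℝ) • (dy 0*dy 2*dy 3*dy 4))) + ((2:ℝ) • (dy 0*dy 2*dy 3*dy 5)) + ((4:ℝ) • (dy 0*dy 2*dy 4*dy 5)) + ((4:ℝ) • (dy 0*dy 3*dy 4*dy 5)) + (-((2:ℝ) • (dy 0*dy 4*dy 6*dy 7))) + ((2:ℝ) • (dy 0*dy 5*dy 6*dy 7)) + (-((2:ℝ) • (dy 1*dy 2*dy 3*dy 4))) + ((2:ℝ) • (dy 1*dy 2*dy 3*dy 5)) + ((2:ℝ) • (dy 1*dy 2*dy 6*dy 7)) + ((2:ℝ) • (dy 1*dy 3*dy 6*dy 7)) + (-((2:ℝ) • (dy 1*dy 4*dy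 6*dy 7))) + ((2:ℝ) • (dy 1*dy 5*dy 6*dy 7)) + (-((4:ℝ) • (dy 2*dy 3*dy 4*dy 5))) + ((2:ℝ) • (dy 2*dy 3*dy 6*dy 7)) + ((2:ℝ) • (dy 2*dy 4*dy 6*dy 7)) + ((2:ℝ) • (dy 2*dy 5*dy 6*dy 7)) + ((2:ℝ) • (dy 3*dy 4*dy 6*dy 7)) + ((2:ℝ) • (dy 3*dy 5*dy 6*dy 7)) + (-((4:ℝ) • (dy 4*dy 5*dy 6*dy 7)))

lemma hω : ω21 = ωc := by
  simp (config := { decide := true }) only [ω21, ωc, mul_add, add_mul, sub_mul, mul_sub,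
    smul_add, smul_sub, smul_neg, smul_smul, smul_mul_assoc, mul_smul_comm,
    dy_sq, dy_swap, dy_sq', dy_swap', mul_neg, neg_mul, neg_neg, mul_zero, zero_mul,
    smul_zero, mul_assoc]
  module

set_option maxHeartbeats 4000000 in
lemma hω2 : ωc * ωc = τ := by
  simp (config := { decide := true }) only [ωc, τ, mul_add, add_mul,
    smul_add, smul_neg, smul_smul, smul_mul_assoc, mul_smul_comm, neg_add,
    dy_sq, dy_swap, dy_sq', dy_swap', mul_neg, neg_mul, neg_neg, mul_zero, zero_mul,
    neg_zero, smul_zero, zero_add, add_zero, mul_assoc]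
  module

set_option maxHeartbeats 4000000 in
lemma hω4 : τ * τ
    = -((48:ℝ) • (dy 0 * dy 1 * dy 2 * dy 3 * dy 4 * dy 5 * dy 6 * dy 7)) := by
  simp (config := { decide := true }) only [τ, mul_add, add_mul,
    smul_add, smul_neg, smul_smul, smul_mul_assoc, mul_smul_comm, neg_add,
    dy_sq, dy_swap, dy_sq', dy_swap', mul_neg, neg_mul, neg_neg, mul_zero, zero_mul,
    neg_zero, smul_zero, zero_add, add_zero, mul_assoc]
  module

theorem stmt3 :
    ((Nat.factorial 4 : ℝ))⁻¹ • (ω21 ^ 4)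
        = (2 : ℝ) • (dy 0 * dy 1 * dy 2 * dy 3 * dy 4 * dy 5 * dy 6 * dy 7)
    ∨ ((Nat.factorial 4 : ℝ))⁻¹ • (ω21 ^ 4)
        = -((2 : ℝ) • (dy 0 * dy 1 * dy 2 * dy 3 * dy 4 * dy 5 * dy 6 * dy 7)) := by
  right
  have h4 : ω21 ^ 4 = (ωc * ωc) * (ωc * ωc) := by
    rw [hω, show (4:ℕ) = 2*2 from rfl, pow_mul, sq, sq]
  rw [h4, hω2, hω4]
  rw [smul_neg, smul_smul]
  norm_num [Nat.factorial]
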